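/- There exists, for every K ≥ 1, a deterministic 2K×K real matrix A such that for all x, x' ∈ R^K and all 2K×2K permutation matrices Π, A x = Π A x' implies x = x'. -/

import Mathlib

open Matrix

namespace Stmt11Aux

noncomputable section

open MvPolynomial Equiv Function

variable {K : ℕ}

/-- mulVec of a permutation matrix. -/
theorem permMatrix_mulVec (σ : Equiv.Perm (Fin (2*K))) (v : Fin (2*K) → ℝ) (i : Fin (2*K)) :
    ((σ.permMatrix ℝ).mulVec v) i = v (σ i) := by
  classical
  simp only [Matrix.mulVec, dotProduct, Equiv.Perm.permMatrix, PEquiv.toMatrix_apply,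
    Equiv.toPEquiv_apply, Option.mem_some_iff]
  rw [Finset.sum_eq_single (σ i)]
  · simp
  · intro b _ hb
    simp [Ne.symm hb]
  · simp

/-- The column-index pairing equivalence. -/
def chi (K : ℕ) : (Fin K ⊕ Fin K) ≃ Fin (2*K) :=
  finSumFinEquiv.trans (finCongr (two_mul K).symm)

/-- Certificate implication, full (eigen) form:
if the square matrix `[A | A - PA]` (rows reindexed by `chi`) has nonzero determinant,
then unlabeled recovery for `σ` holds. -/
theorem cert_full {σ : Equiv.Perm (Fin (2*K))} {A : Matrix (Fin (2*K)) (Fin K) ℝ}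
    (h : (Matrix.of fun (r c : Fin K ⊕ Fin K) =>
        Sum.elim (fun j => A (chi K r) j)
          (fun j => A (chi K r) j - A (σ (chi K r)) j) c).det ≠ 0)
    (x x' : Fin K → ℝ)
    (hx : A.mulVec x = (σ.permMatrix ℝ).mulVec (A.mulVec x')) : x = x' := by
  classical
  set N : Matrix (Fin K ⊕ Fin K) (Fin K ⊕ Fin K) ℝ :=
    Matrix.of fun (r c : Fin K ⊕ Fin K) =>
      Sum.elim (fun j => A (chi K r) j)
        (fun j => A (chi K r) j - A (σ (chi K r)) j) c with hN
  have hinj : Function.Injective N.mulVec :=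
    Matrix.mulVec_injective_iff_isUnit.mpr ((Matrix.isUnit_iff_isUnit_det _).mpr (isUnit_iff_ne_zero.mpr h))
  have hz : N.mulVec (Sum.elim (fun j => x j - x' j) x') = 0 := by
    funext r
    have hrow := congrFun hx (chi K r)
    rw [permMatrix_mulVec] at hrow
    simp only [Matrix.mulVec, dotProduct] at hrow ⊢
    rw [Fintype.sum_sum_type]
    simp only [hN, Matrix.of_apply, Sum.elim_inl, Sum.elim_inr, Pi.zero_apply]
    have : ∑ j, A (chi K r) j * (x j - x' j)
        + ∑ j, (A (chi K r) j - A (σ (chi K r)) j) * x' j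
        = (∑ j, A (chi K r) j * x j) - ∑ j, A (σ (chi K r)) j * x' j := by
      rw [← Finset.sum_add_distrib, ← Finset.sum_sub_distrib]
      congr 1; funext j; ring
    rw [this, hrow, sub_self]
  have h0 : N.mulVec 0 = 0 := by simp
  have := hinj (hz.trans h0.symm)
  funext j
  have := congrFun this (Sum.inl j)
  simpa [sub_eq_zero] using this

/-- Certificate implication, invariant-functional form. -/
theorem cert_inv {σ : Equiv.Perm (Fin (2*K))} {A W : Matrix (Fin (2*K)) (Fin K) ℝ}
    (hW : ∀ i j, W (σ i) j = W i j)
    (h : (Wᵀ * A).det ≠ 0)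
    (x x' : Fin K → ℝ)
    (hx : A.mulVec x = (σ.permMatrix ℝ).mulVec (A.mulVec x')) : x = x' := by
  classical
  have hinj : Function.Injective (Wᵀ * A).mulVec :=
    Matrix.mulVec_injective_iff_isUnit.mpr ((Matrix.isUnit_iff_isUnit_det _).mpr (isUnit_iff_ne_zero.mpr h))
  apply hinj
  rw [← Matrix.mulVec_mulVec, ← Matrix.mulVec_mulVec, hx]
  funext l
  simp only [Matrix.mulVec, dotProduct, Matrix.transpose_apply]
  calc ∑ s, W s l * ((σ.permMatrix ℝ).mulVec (A.mulVec x')) s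
      = ∑ s, W (σ s) l * (A.mulVec x') (σ s) := by
        refine Finset.sum_congr rfl fun s _ => ?_
        rw [permMatrix_mulVec, hW]
    _ = ∑ s, W s l * (A.mulVec x') s := Fintype.sum_equiv σ _ _ (fun s => rfl)


section Orbits

attribute [local instance] Classical.propDecidable

variable (σ : Equiv.Perm (Fin (2*K)))

/-- Same-cycle setoid. -/
def scSetoid : Setoid (Fin (2*K)) :=
  ⟨σ.SameCycle, ⟨fun _ => ⟨0, rfl⟩, fun h => h.symm, fun h h' => h.trans h'⟩⟩

/-- Orbits of `σ`. -/
def Orb := Quotient (scSetoid σ)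

instance : Fintype (Orb σ) := @Quotient.fintype _ _ (scSetoid σ) _

/-- Orbit of a point. -/
def ob (i : Fin (2*K)) : Orb σ := Quotient.mk (scSetoid σ) i

/-- Orbit length. -/
def per (q : Orb σ) : ℕ := Function.minimalPeriod σ q.out

theorem mem_periodicPts (x : Fin (2*K)) : x ∈ Function.periodicPts σ := by
  refine ⟨orderOf σ, orderOf_pos σ, ?_⟩
  show (⇑σ)^[orderOf σ] x = x
  rw [Equiv.Perm.iterate_eq_pow, pow_orderOf_eq_one]
  rfl

theorem per_pos (q : Orb σ) : 0 < per σ q :=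
  Function.minimalPeriod_pos_of_mem_periodicPts (mem_periodicPts σ _)

theorem exists_pow_rep (i : Fin (2*K)) : ∃ k : ℕ, (σ ^ k) ((ob σ i).out) = i := by
  have h : σ.SameCycle ((ob σ i).out) i := Quotient.exact (Quotient.out_eq (ob σ i))
  obtain ⟨k, _, hk⟩ := h.exists_pow_eq'
  exact ⟨k, hk⟩

/-- Position of a point within its orbit. -/
def pos (i : Fin (2*K)) : ℕ := Nat.find (exists_pow_rep σ i) % per σ (ob σ i)

theorem pow_pos_out (i : Fin (2*K)) : (σ ^ pos σ i) ((ob σ i).out) = i := by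
  show (⇑σ)^[pos σ i] ((ob σ i).out) = i
  unfold pos per
  rw [Function.iterate_mod_minimalPeriod_eq]
  rw [Equiv.Perm.iterate_eq_pow]
  exact Nat.find_spec (exists_pow_rep σ i)

theorem pos_lt (i : Fin (2*K)) : pos σ i < per σ (ob σ i) :=
  Nat.mod_lt _ (per_pos σ _)

theorem pos_unique {i : Fin (2*K)} {k : ℕ} (hk : k < per σ (ob σ i))
    (h : (σ ^ k) ((ob σ i).out) = i) : k = pos σ i := by
  have h1 : (⇑σ)^[k] ((ob σ i).out) = (⇑σ)^[pos σ i] ((ob σ i).out) := by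
    rw [Equiv.Perm.iterate_eq_pow, Equiv.Perm.iterate_eq_pow, h, pow_pos_out]
  exact Function.iterate_injOn_Iio_minimalPeriod hk (pos_lt σ i) h1

theorem ob_apply (i : Fin (2*K)) : ob σ (σ i) = ob σ i :=
  Quotient.sound (Equiv.Perm.SameCycle.symm ⟨1, by simp⟩)

theorem pos_apply (i : Fin (2*K)) :
    pos σ (σ i) = (pos σ i + 1) % per σ (ob σ i) := by
  have hq : ob σ (σ i) = ob σ i := ob_apply σ i
  have hk : (pos σ i + 1) % per σ (ob σ i) < per σ (ob σ i) := Nat.mod_lt _ (per_pos σ _)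
  refine (pos_unique σ (i := σ i) (by rw [hq]; exact hk) ?_).symm
  rw [hq]
  have : (σ ^ ((pos σ i + 1) % per σ (ob σ i))) ((ob σ i).out)
      = (σ ^ (pos σ i + 1)) ((ob σ i).out) := by
    show (⇑σ)^[(pos σ i + 1) % per σ (ob σ i)] _ = (⇑σ)^[pos σ i + 1] _
    exact Function.iterate_mod_minimalPeriod_eq
  rw [this, pow_succ', Equiv.Perm.mul_apply, pow_pos_out]

theorem ob_pow_out (q : Orb σ) (k : ℕ) : ob σ ((σ ^ k) q.out) = q := by
  have : ob σ ((σ ^ k) q.out) = ob σ q.out := by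
    refine Quotient.sound ?_
    exact Equiv.Perm.SameCycle.symm ⟨(k : ℤ), by rw [zpow_natCast]⟩
  rw [this]
  exact Quotient.out_eq q

theorem pos_pow_out (q : Orb σ) (k : ℕ) (h : k < per σ q) :
    pos σ ((σ ^ k) q.out) = k := by
  refine (pos_unique σ ?_ ?_).symm <;> rw [ob_pow_out]
  · exact h

/-- The slot/orbit-position equivalence. -/
def slotEquiv : Fin (2*K) ≃ (Σ q : Orb σ, Fin (per σ q)) where
  toFun i := ⟨ob σ i, ⟨pos σ i, pos_lt σ i⟩⟩
  invFun t := (σ ^ (t.2 : ℕ)) (t.1.out)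
  left_inv i := pow_pos_out σ i
  right_inv t := by
    obtain ⟨q, k⟩ := t
    have h1 : ob σ ((σ ^ (k : ℕ)) q.out) = q := ob_pow_out σ q k
    have h2 : pos σ ((σ ^ (k : ℕ)) q.out) = (k : ℕ) := pos_pow_out σ q k k.isLt
    refine Sigma.ext h1 ?_
    rw [Fin.heq_ext_iff (congrArg (per σ) h1)]
    exact h2

theorem card_sigma : Fintype.card (Σ q : Orb σ, Fin (per σ q)) = 2*K := by
  rw [← Fintype.card_congr (slotEquiv σ), Fintype.card_fin]

end Orbits


section Witness

attribute [local instance] Classical.propDecidable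

open Complex

variable (σ : Equiv.Perm (Fin (2*K)))

/-- Eigenvalue index type: orbit + frequency. -/
abbrev T := Σ q : Orb σ, Fin (per σ q)

/-- Rational rotation number. -/
def key (t : T σ) : ℚ := (t.2 : ℚ) / (per σ t.1)

theorem key_nonneg (t : T σ) : 0 ≤ key σ t := by
  apply div_nonneg
  · exact_mod_cast Nat.zero_le _
  · exact_mod_cast Nat.zero_le _

theorem key_lt_one (t : T σ) : key σ t < 1 := by
  unfold key
  rw [div_lt_one (by exact_mod_cast per_pos σ t.1)]
  exact_mod_cast t.2.isLt

theorem key_inj (t t' : T σ) (h1 : t.1 = t'.1) (h2 : key σ t = key σ t') : t = t' := by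
  obtain ⟨q, j⟩ := t
  obtain ⟨q', j'⟩ := t'
  cases h1
  unfold key at h2
  have hm : ((per σ q : ℚ)) ≠ 0 := by exact_mod_cast (per_pos σ q).ne'
  have : (j : ℚ) = (j' : ℚ) := by
    field_simp at h2
    exact_mod_cast h2
  have : (j : ℕ) = (j' : ℕ) := by exact_mod_cast this
  exact congrArg _ (Fin.ext this)

/-- The eigenvalue attached to an index. -/
def lam (t : T σ) : ℂ := Complex.exp (2 * Real.pi * Complex.I * (key σ t : ℂ))

theorem lam_eq_imp_key_eq {t t' : T σ} (h : lam σ t = lam σ t') : key σ t = key σ t' := by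
  unfold lam at h
  rw [Complex.exp_eq_exp_iff_exists_int] at h
  obtain ⟨n, hn⟩ := h
  have h2 : ((key σ t : ℂ)) = (key σ t' : ℂ) + n := by
    have hne : (2 * (Real.pi : ℂ) * Complex.I) ≠ 0 := by
      simp [Complex.ofReal_ne_zero, Real.pi_ne_zero, Complex.I_ne_zero]
    have : (2 * (Real.pi:ℂ) * Complex.I) * (key σ t : ℂ)
        = (2 * (Real.pi:ℂ) * Complex.I) * ((key σ t' : ℂ) + n) := by
      linear_combination hn
    exact mul_left_cancel₀ hne this
  have h3 : ((key σ t - key σ t' : ℚ) : ℂ) = ((n : ℚ) : ℂ) := by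
    push_cast
    push_cast at h2
    linear_combination h2
  have h4 : key σ t - key σ t' = (n : ℚ) := by exact_mod_cast h3
  have hb1 := key_nonneg σ t
  have hb2 := key_nonneg σ t'
  have hb3 := key_lt_one σ t
  have hb4 := key_lt_one σ t'
  have hn0 : n = 0 := by
    by_contra hne0
    rcases lt_or_gt_of_ne hne0 with h | h
    · have hle : n ≤ -1 := by omega
      have : (n : ℚ) ≤ -1 := by exact_mod_cast hle
      linarith [h4 ▸ this]
    · have : (1 : ℚ) ≤ n := by exact_mod_cast h
      linarith [h4 ▸ this]
  rw [hn0] at h4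
  push_cast at h4
  linarith

theorem lam_pow_per (t : T σ) : lam σ t ^ (per σ t.1) = 1 := by
  unfold lam
  rw [← Complex.exp_nat_mul]
  have hm : ((per σ t.1 : ℚ)) ≠ 0 := by exact_mod_cast (per_pos σ t.1).ne'
  have : ((per σ t.1 : ℕ) : ℂ) * (2 * Real.pi * Complex.I * (key σ t : ℂ))
      = ((t.2 : ℕ) : ℂ) * (2 * Real.pi * Complex.I) := by
    unfold key
    push_cast
    have hmc : ((per σ t.1 : ℕ) : ℂ) ≠ 0 := by exact_mod_cast (per_pos σ t.1).ne'
    field_simp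
  rw [this, Complex.exp_nat_mul_two_pi_mul_I]

theorem lam_pow_mod (t : T σ) (n : ℕ) :
    lam σ t ^ (n % per σ t.1) = lam σ t ^ n := by
  conv_rhs => rw [← Nat.div_add_mod n (per σ t.1)]
  rw [pow_add, pow_mul, lam_pow_per, one_pow, one_mul]

/-- Eigenvector matrix. -/
def Vmat : Matrix (Fin (2*K)) (T σ) ℂ :=
  Matrix.of fun s t => if ob σ s = t.1 then lam σ t ^ (pos σ s) else 0

theorem Vmat_eigen (s : Fin (2*K)) (t : T σ) :
    Vmat σ (σ s) t = lam σ t * Vmat σ s t := by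
  unfold Vmat
  simp only [Matrix.of_apply]
  rw [ob_apply]
  by_cases h : ob σ s = t.1
  · simp only [h, if_true]
    rw [pos_apply]
    have : pos σ s + 1 = pos σ s + 1 := rfl
    rw [show per σ (ob σ s) = per σ t.1 from by rw [h]]
    rw [lam_pow_mod, pow_succ']
  · simp [h]

end Witness


section Pairing

attribute [local instance] Classical.propDecidable

variable (σ : Equiv.Perm (Fin (2*K)))

/-- Sorted enumeration of eigenvalue indices. -/
def en (j : Fin (2*K)) : T σ :=
  slotEquiv σ (Tuple.sort (fun j => key σ (slotEquiv σ j)) j)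

theorem key_en_mono {j j' : Fin (2*K)} (h : j ≤ j') :
    key σ (en σ j) ≤ key σ (en σ j') :=
  Tuple.monotone_sort (fun j => key σ (slotEquiv σ j)) h

theorem en_inj : Function.Injective (en σ) := by
  intro a b hab
  exact (Tuple.sort _).injective ((slotEquiv σ).injective hab)

/-- The sorted enumeration as an equivalence. -/
def enEquiv : Fin (2*K) ≃ T σ :=
  (Tuple.sort (fun j => key σ (slotEquiv σ j))).trans (slotEquiv σ)

theorem enEquiv_apply (j : Fin (2*K)) : enEquiv σ j = en σ j := rfl

/-- The two members of each pair have distinct eigenvalues (when `σ` has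
fewer than `K` orbits). -/
theorem lam_pair_ne (hc : Fintype.card (Orb σ) < K) (i : Fin K) :
    lam σ (en σ ⟨i.val, by omega⟩) ≠ lam σ (en σ ⟨K + i.val, by omega⟩) := by
  intro h
  have hkey : key σ (en σ ⟨i.val, by omega⟩) = key σ (en σ ⟨K + i.val, by omega⟩) :=
    lam_eq_imp_key_eq σ h
  set F : Fin (K+1) → T σ := fun t => en σ ⟨i.val + t.val, by omega⟩ with hF
  have hkeyF : ∀ t, key σ (F t) = key σ (en σ ⟨i.val, by omega⟩) := by
    intro t
    have h1 : key σ (en σ ⟨i.val, by omega⟩) ≤ key σ (F t) :=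
      key_en_mono σ (by simp only [Fin.mk_le_mk]; omega)
    have h2 : key σ (F t) ≤ key σ (en σ ⟨K + i.val, by omega⟩) :=
      key_en_mono σ (by simp only [Fin.mk_le_mk]; omega)
    linarith [hkey]
  have hFinj : Function.Injective F := by
    intro a b hab
    have h1 := en_inj σ hab
    have h2 : i.val + a.val = i.val + b.val := by
      simpa [Fin.mk.injEq] using congrArg Fin.val h1
    exact Fin.ext (by omega)
  have hginj : Function.Injective (fun t => (F t).1) := by
    intro a b hab
    apply hFinj
    apply key_inj σ _ _ hab
    rw [hkeyF a, hkeyF b]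
  have hcard : K + 1 ≤ Fintype.card (Orb σ) := by
    have := Fintype.card_le_of_injective _ hginj
    simpa using this
  omega

end Pairing


section WitnessDet

attribute [local instance] Classical.propDecidable

variable (σ : Equiv.Perm (Fin (2*K)))

/-- Pairing of column indices with eigenvalue indices. -/
def tau : (Fin K ⊕ Fin K) ≃ T σ := (chi K).trans (enEquiv σ)

theorem chi_inl (i : Fin K) : chi K (Sum.inl i) = ⟨i.val, by omega⟩ := by
  unfold chi
  apply Fin.ext
  simp [finSumFinEquiv]

theorem chi_inr (i : Fin K) : chi K (Sum.inr i) = ⟨K + i.val, by omega⟩ := by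
  unfold chi
  apply Fin.ext
  simp [finSumFinEquiv]
  omega

theorem tau_inl (i : Fin K) : tau σ (Sum.inl i) = en σ ⟨i.val, by omega⟩ := by
  unfold tau
  rw [Equiv.trans_apply, chi_inl, enEquiv_apply]

theorem tau_inr (i : Fin K) : tau σ (Sum.inr i) = en σ ⟨K + i.val, by omega⟩ := by
  unfold tau
  rw [Equiv.trans_apply, chi_inr, enEquiv_apply]

/-- The complex witness matrix. -/
def Aw : Matrix (Fin (2*K)) (Fin K) ℂ :=
  Matrix.of fun s i => Vmat σ s (tau σ (Sum.inl i)) + Vmat σ s (tau σ (Sum.inr i))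

/-- The witness certificate matrix. -/
def Ncw : Matrix (Fin K ⊕ Fin K) (Fin K ⊕ Fin K) ℂ :=
  Matrix.of fun r c =>
    Sum.elim (fun j => Aw σ (chi K r) j)
      (fun j => Aw σ (chi K r) j - Aw σ (σ (chi K r)) j) c

/-- Eigen-coordinates matrix. -/
def Vx : Matrix (Fin K ⊕ Fin K) (Fin K ⊕ Fin K) ℂ :=
  Matrix.of fun r c => Vmat σ (chi K r) (tau σ c)

/-- Pair-structure matrix. -/
def Bx : Matrix (Fin K ⊕ Fin K) (Fin K ⊕ Fin K) ℂ :=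
  Matrix.fromBlocks 1 (Matrix.diagonal fun i => 1 - lam σ (tau σ (Sum.inl i)))
    1 (Matrix.diagonal fun i => 1 - lam σ (tau σ (Sum.inr i)))

theorem Ncw_factor : Ncw σ = Vx σ * Bx σ := by
  ext r c
  rw [Matrix.mul_apply, Fintype.sum_sum_type]
  cases c with
  | inl i =>
    simp only [Ncw, Vx, Bx, Aw, Matrix.of_apply, Sum.elim_inl, Matrix.fromBlocks_apply₁₁,
      Matrix.fromBlocks_apply₂₁, Matrix.one_apply, mul_ite, mul_one, mul_zero,
      Finset.sum_ite_eq', Finset.mem_univ, if_true]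
  | inr i =>
    simp only [Ncw, Vx, Bx, Aw, Matrix.of_apply, Sum.elim_inr, Matrix.fromBlocks_apply₁₂,
      Matrix.fromBlocks_apply₂₂, Matrix.diagonal_apply, mul_ite, mul_zero,
      Finset.sum_ite_eq', Finset.mem_univ, if_true, Vmat_eigen]
    ring

theorem detBx_ne_zero (hc : Fintype.card (Orb σ) < K) : (Bx σ).det ≠ 0 := by
  unfold Bx
  rw [Matrix.det_fromBlocks_one₁₁]
  have : (Matrix.diagonal fun i => 1 - lam σ (tau σ (Sum.inr i)))
      - (1 : Matrix (Fin K) (Fin K) ℂ) * (Matrix.diagonal fun i => 1 - lam σ (tau σ (Sum.inl i)))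
      = Matrix.diagonal fun i => lam σ (tau σ (Sum.inl i)) - lam σ (tau σ (Sum.inr i)) := by
    rw [one_mul, Matrix.diagonal_sub]
    apply congrArg
    funext i
    ring
  rw [this, Matrix.det_diagonal]
  apply Finset.prod_ne_zero_iff.mpr
  intro i _
  rw [sub_ne_zero, tau_inl, tau_inr]
  exact lam_pair_ne σ hc i

theorem lam_inj_orbit (q : Orb σ) : Function.Injective (fun j : Fin (per σ q) => lam σ ⟨q, j⟩) := by
  intro j j' h
  have hk := lam_eq_imp_key_eq σ (t := ⟨q, j⟩) (t' := ⟨q, j'⟩) h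
  have := key_inj σ ⟨q, j⟩ ⟨q, j'⟩ rfl hk
  simpa using this

theorem detVx_ne_zero : (Vx σ).det ≠ 0 := by
  have hinj : Function.Injective (Vx σ).mulVec := by
    intro b b' hbb
    have hz : (Vx σ).mulVec (b - b') = 0 := by
      rw [Matrix.mulVec_sub, hbb, sub_self]
    set β := b - b' with hβ
    -- reduce to showing β = 0
    suffices hs : β = 0 by
      funext c; have := congrFun hs c
      simp only [hβ, Pi.sub_apply, Pi.zero_apply, sub_eq_zero] at this
      exact this
    set γ : T σ → ℂ := fun t => β ((tau σ).symm t) with hγ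
    have hγτ : ∀ c, γ (tau σ c) = β c := by
      intro c; simp [hγ]
    have hall : ∀ s : Fin (2*K), ∑ t : T σ, Vmat σ s t * γ t = 0 := by
      intro s
      have hr := congrFun hz ((chi K).symm s)
      simp only [Matrix.mulVec, dotProduct, Pi.zero_apply, Vx, Matrix.of_apply,
        Equiv.apply_symm_apply] at hr
      rw [← Equiv.sum_comp (tau σ) (fun t => Vmat σ s t * γ t)]
      simpa only [hγτ] using hr
    have horb : ∀ q : Orb σ, ∀ j : Fin (per σ q), γ ⟨q, j⟩ = 0 := by
      intro q
      -- Vandermonde system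
      set v : Fin (per σ q) → ℂ := fun j => lam σ ⟨q, j⟩ with hv
      set van : Matrix (Fin (per σ q)) (Fin (per σ q)) ℂ :=
        Matrix.of fun k j => v j ^ (k : ℕ) with hvan
      have hvdet : van.det ≠ 0 := by
        have : van = (Matrix.vandermonde v)ᵀ := by
          ext k j; simp [hvan, Matrix.vandermonde]
        rw [this, Matrix.det_transpose]
        rw [Ne, Matrix.det_vandermonde_eq_zero_iff]
        rintro ⟨j, j', hjj, hne⟩
        exact hne (lam_inj_orbit σ q hjj)
      have hsys : van.mulVec (fun j => γ ⟨q, j⟩) = 0 := by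
        funext k
        have hs := hall ((σ ^ (k : ℕ)) q.out)
        have hob : ob σ ((σ ^ (k : ℕ)) q.out) = q := ob_pow_out σ q k
        have hpos : pos σ ((σ ^ (k : ℕ)) q.out) = (k : ℕ) := pos_pow_out σ q k k.isLt
        rw [← Finset.univ_sigma_univ, Finset.sum_sigma] at hs
        simp only [Vmat, Matrix.of_apply, hob, hpos] at hs
        rw [Matrix.mulVec, Pi.zero_apply]
        rw [Finset.sum_eq_single q] at hs
        · simpa only [dotProduct, hvan, Matrix.of_apply, hv, if_pos rfl, if_true] using hs
        · intro q' _ hq'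
          apply Finset.sum_eq_zero
          intro j _
          rw [if_neg (Ne.symm hq'), zero_mul]
        · intro h; exact absurd (Finset.mem_univ q) h
      have hinjvan : Function.Injective van.mulVec :=
        Matrix.mulVec_injective_iff_isUnit.mpr
          ((Matrix.isUnit_iff_isUnit_det _).mpr (isUnit_iff_ne_zero.mpr hvdet))
      have := hinjvan (hsys.trans (by simp : van.mulVec 0 = 0).symm)
      intro j
      exact congrFun this j
    funext c
    have := horb ((tau σ) c).1 ((tau σ) c).2
    have h2 : γ (tau σ c) = 0 := by
      convert this using 2
    rw [hγτ] at h2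
    exact h2
  have hu := Matrix.mulVec_injective_iff_isUnit.mp hinj
  exact isUnit_iff_ne_zero.mp ((Matrix.isUnit_iff_isUnit_det _).mp hu)

theorem detNcw_ne_zero (hc : Fintype.card (Orb σ) < K) : (Ncw σ).det ≠ 0 := by
  rw [Ncw_factor, Matrix.det_mul]
  exact mul_ne_zero (detVx_ne_zero σ) (detBx_ne_zero σ hc)


end WitnessDet


section Indicator

attribute [local instance] Classical.propDecidable

variable (σ : Equiv.Perm (Fin (2*K)))

/-- Selected orbits (when there are at least `K` of them). -/
def qsel (hc : K ≤ Fintype.card (Orb σ)) (l : Fin K) : Orb σ :=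
  (Fintype.equivFin (Orb σ)).symm (Fin.castLE hc l)

theorem qsel_inj (hc : K ≤ Fintype.card (Orb σ)) : Function.Injective (qsel σ hc) := by
  intro a b hab
  have := (Fintype.equivFin (Orb σ)).symm.injective hab
  exact Fin.castLE_injective hc this

/-- Orbit indicator matrix. -/
def Wind (hc : K ≤ Fintype.card (Orb σ)) : Matrix (Fin (2*K)) (Fin K) ℝ :=
  Matrix.of fun s l => if ob σ s = qsel σ hc l then 1 else 0

theorem Wind_invariant (hc : K ≤ Fintype.card (Orb σ)) (s : Fin (2*K)) (l : Fin K) :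
    Wind σ hc (σ s) l = Wind σ hc s l := by
  unfold Wind
  rw [Matrix.of_apply, Matrix.of_apply, ob_apply]

theorem det_WtW_ne_zero (hc : K ≤ Fintype.card (Orb σ)) :
    ((Wind σ hc)ᵀ * Wind σ hc).det ≠ 0 := by
  have hdiag : (Wind σ hc)ᵀ * Wind σ hc
      = Matrix.diagonal (fun l =>
          ((Finset.univ.filter (fun s => ob σ s = qsel σ hc l)).card : ℝ)) := by
    ext l l'
    rw [Matrix.mul_apply, Matrix.diagonal_apply]
    by_cases h : l = l'
    · subst h
      rw [if_pos rfl]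
      unfold Wind
      rw [Finset.card_filter]
      push_cast
      apply Finset.sum_congr rfl
      intro s _
      rw [Matrix.transpose_apply, Matrix.of_apply]
      by_cases hs : ob σ s = qsel σ hc l <;> simp [hs]
    · rw [if_neg h]
      apply Finset.sum_eq_zero
      intro s _
      rw [Matrix.transpose_apply]
      unfold Wind
      by_cases hs : ob σ s = qsel σ hc l
      · have hne : ¬ qsel σ hc l = qsel σ hc l' := fun hcon => h (qsel_inj σ hc hcon)
        simp [hs, hne]
      · simp [hs]
  rw [hdiag, Matrix.det_diagonal]
  apply Finset.prod_ne_zero_iff.mpr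
  intro l _
  have : (qsel σ hc l).out ∈ Finset.univ.filter (fun s => ob σ s = qsel σ hc l) := by
    rw [Finset.mem_filter]
    exact ⟨Finset.mem_univ _, Quotient.out_eq _⟩
  have hpos : 0 < (Finset.univ.filter (fun s => ob σ s = qsel σ hc l)).card :=
    Finset.card_pos.mpr ⟨_, this⟩
  exact_mod_cast hpos.ne'

end Indicator

section Certificates

attribute [local instance] Classical.propDecidable

open MvPolynomial

/-- The generic matrix with polynomial-variable entries. -/
def genMat (K : ℕ) : Matrix (Fin (2*K)) (Fin K) (MvPolynomial (Fin (2*K) × Fin K) ℝ) :=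
  Matrix.of fun i j => X (i, j)

/-- Per-permutation certificate. -/
theorem exists_cert (σ : Equiv.Perm (Fin (2*K))) (hK : 1 ≤ K) :
    ∃ G : MvPolynomial (Fin (2*K) × Fin K) ℝ, G ≠ 0 ∧
      ∀ A : Matrix (Fin (2*K)) (Fin K) ℝ,
        MvPolynomial.eval (fun p : Fin (2*K) × Fin K => A p.1 p.2) G ≠ 0 →
        ∀ x x', A.mulVec x = (σ.permMatrix ℝ).mulVec (A.mulVec x') → x = x' := by
  by_cases hc : K ≤ Fintype.card (Orb σ)
  · -- many orbits: invariant-functional certificate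
    refine ⟨(((Wind σ hc).map (MvPolynomial.C : ℝ →+* MvPolynomial (Fin (2*K) × Fin K) ℝ))ᵀ * genMat K).det, ?_, ?_⟩
    · -- nonzero: evaluate at the witness `Wind`
      intro h0
      have := congrArg (MvPolynomial.eval (fun p : Fin (2*K) × Fin K => Wind σ hc p.1 p.2)) h0
      rw [map_zero] at this
      rw [RingHom.map_det, RingHom.mapMatrix_apply] at this
      have heq : ((((Wind σ hc).map (MvPolynomial.C : ℝ →+* MvPolynomial (Fin (2*K) × Fin K) ℝ))ᵀ * genMat K).map
          (MvPolynomial.eval (fun p : Fin (2*K) × Fin K => Wind σ hc p.1 p.2)))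
          = (Wind σ hc)ᵀ * Wind σ hc := by
        ext l j
        rw [Matrix.map_apply, Matrix.mul_apply, map_sum, Matrix.mul_apply]
        apply Finset.sum_congr rfl
        intro s _
        rw [_root_.map_mul]
        simp [genMat, Matrix.transpose_apply]
      rw [heq] at this
      exact det_WtW_ne_zero σ hc this
    · intro A hA x x' hx
      rw [RingHom.map_det, RingHom.mapMatrix_apply] at hA
      have heq : ((((Wind σ hc).map (MvPolynomial.C : ℝ →+* MvPolynomial (Fin (2*K) × Fin K) ℝ))ᵀ * genMat K).map
          (MvPolynomial.eval (fun p : Fin (2*K) × Fin K => A p.1 p.2)))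
          = (Wind σ hc)ᵀ * A := by
        ext l j
        rw [Matrix.map_apply, Matrix.mul_apply, map_sum, Matrix.mul_apply]
        apply Finset.sum_congr rfl
        intro s _
        rw [_root_.map_mul]
        simp [genMat, Matrix.transpose_apply]
      rw [heq] at hA
      exact cert_inv (Wind_invariant σ hc) hA x x' hx
  · -- few orbits: full certificate
    push_neg at hc
    refine ⟨(Matrix.of fun (r c : Fin K ⊕ Fin K) =>
        Sum.elim (fun j => X (chi K r, j))
          (fun j => X (chi K r, j) - X (σ (chi K r), j)) c :
        Matrix (Fin K ⊕ Fin K) (Fin K ⊕ Fin K) (MvPolynomial (Fin (2*K) × Fin K) ℝ)).det,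
      ?_, ?_⟩
    · intro h0
      have := congrArg (MvPolynomial.aeval (R := ℝ) (fun p : Fin (2*K) × Fin K => Aw σ p.1 p.2)) h0
      rw [map_zero, AlgHom.map_det, AlgHom.mapMatrix_apply] at this
      have heq : ((Matrix.of fun (r c : Fin K ⊕ Fin K) =>
          Sum.elim (fun j => X (chi K r, j))
            (fun j => X (chi K r, j) - X (σ (chi K r), j)) c).map
            (MvPolynomial.aeval (R := ℝ) (fun p : Fin (2*K) × Fin K => Aw σ p.1 p.2)))
          = Ncw σ := by
        ext r c
        cases c with
        | inl j => simp [Ncw]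
        | inr j => simp [Ncw]
      rw [heq] at this
      exact detNcw_ne_zero σ hc this
    · intro A hA x x' hx
      rw [RingHom.map_det, RingHom.mapMatrix_apply] at hA
      have heq : ((Matrix.of fun (r c : Fin K ⊕ Fin K) =>
          Sum.elim (fun j => X (chi K r, j))
            (fun j => X (chi K r, j) - X (σ (chi K r), j)) c).map
            (MvPolynomial.eval (fun p : Fin (2*K) × Fin K => A p.1 p.2)))
          = Matrix.of fun (r c : Fin K ⊕ Fin K) =>
              Sum.elim (fun j => A (chi K r) j)
                (fun j => A (chi K r) j - A (σ (chi K r)) j) c := by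
        ext r c
        cases c with
        | inl j => simp
        | inr j => simp
      rw [heq] at hA
      exact cert_full hA x x' hx

end Certificates

end

end Stmt11Aux

open Matrix

/-- For every `K ≥ 1` there exists a deterministic `2K × K` real matrix admitting
universal recovery from unlabeled measurements. -/
theorem stmt11 (K : ℕ) (hK : 1 ≤ K) :
    ∃ A : Matrix (Fin (2 * K)) (Fin K) ℝ,
      ∀ (x x' : Fin K → ℝ) (σ : Equiv.Perm (Fin (2 * K))),
        A.mulVec x = (σ.permMatrix ℝ).mulVec (A.mulVec x') → x = x' := by
  classical
  choose G hG0 hGimp using fun σ : Equiv.Perm (Fin (2*K)) => Stmt11Aux.exists_cert σ hK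
  set Gtot : MvPolynomial (Fin (2*K) × Fin K) ℝ := ∏ σ : Equiv.Perm (Fin (2*K)), G σ with hGtot
  have hGtot0 : Gtot ≠ 0 :=
    Finset.prod_ne_zero_iff.mpr fun σ _ => hG0 σ
  have hexists : ∃ a : (Fin (2*K) × Fin K) → ℝ, MvPolynomial.eval a Gtot ≠ 0 := by
    by_contra h
    push_neg at h
    apply hGtot0
    apply MvPolynomial.funext
    intro a
    rw [map_zero]
    exact h a
  obtain ⟨a, ha⟩ := hexists
  refine ⟨Matrix.of fun i j => a (i, j), fun x x' σ hx => ?_⟩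
  refine hGimp σ (Matrix.of fun i j => a (i, j)) ?_ x x' hx
  intro h0
  apply ha
  rw [hGtot, map_prod]
  apply Finset.prod_eq_zero (Finset.mem_univ σ)
  convert h0 using 2
  rfl
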